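/- An invertible real D×D matrix M can be written as M = λs, where λ is a Lorentz matrix (λᵗηλ = η with η = diag(-1,1,...,1)) and s is a symmetric matrix, if and only if the matrix ηMᵗηM has a real square root that can be written as η times a symmetric matrix. -/

import Mathlib

open Matrix

theorem stmt_0 (D : ℕ) (M : Matrix (Fin D) (Fin D) ℝ) (hM : IsUnit M.det)
    (η : Matrix (Fin D) (Fin D) ℝ)
    (hη : η = Matrix.diagonal (fun i : Fin D => if (i : ℕ) = 0 then (-1 : ℝ) else 1)) :
    (∃ (Λ s : Matrix (Fin D) (Fin D) ℝ), Λᵀ * η * Λ = η ∧ sᵀ = s ∧ M = Λ * s) ↔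
    (∃ B : Matrix (Fin D) (Fin D) ℝ, B * B = η * Mᵀ * η * M ∧
      ∃ s : Matrix (Fin D) (Fin D) ℝ, sᵀ = s ∧ B = η * s) := by
  have hη2 : η * η = 1 := by
    subst hη
    rw [Matrix.diagonal_mul_diagonal]
    convert Matrix.diagonal_one with i
    split <;> norm_num
  constructor
  · rintro ⟨Λ, s, hΛ, hs, rfl⟩
    refine ⟨η * s, ?_, s, hs, rfl⟩
    rw [Matrix.transpose_mul, hs]
    have hΛ' : Λᵀ * (η * (Λ * s)) = η * s := by
      rw [← Matrix.mul_assoc, ← Matrix.mul_assoc, hΛ]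
    simp only [Matrix.mul_assoc]
    rw [hΛ']
  · rintro ⟨B, hB, s, hs, rfl⟩
    have hdetη : IsUnit η.det := by
      refine IsUnit.of_mul_eq_one η.det ?_
      rw [← Matrix.det_mul, hη2, Matrix.det_one]
    have hdetηs : IsUnit ((η * s).det) := by
      have h1 : ((η * s).det) * ((η * s).det) = η.det * Mᵀ.det * η.det * M.det := by
        rw [← Matrix.det_mul, hB]
        simp [Matrix.det_mul]
      have hr : IsUnit (η.det * Mᵀ.det * η.det * M.det) := by
        rw [Matrix.det_transpose]
        exact ((hdetη.mul hM).mul hdetη).mul hM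
      rw [← h1] at hr
      exact isUnit_of_mul_isUnit_left hr
    have hsdet : IsUnit s.det := by
      rw [Matrix.det_mul] at hdetηs
      exact isUnit_of_mul_isUnit_right hdetηs
    have hkey : s * (η * s) = Mᵀ * (η * M) := by
      have h := congrArg (fun X => η * X) hB
      simp only [← Matrix.mul_assoc] at h
      rw [hη2, Matrix.one_mul, Matrix.one_mul] at h
      simp only [Matrix.mul_assoc] at h
      exact h
    refine ⟨M * s⁻¹, s, ?_, hs, ?_⟩
    · rw [Matrix.transpose_mul, Matrix.transpose_nonsing_inv, hs]
      have h2 : s⁻¹ * Mᵀ * η * (M * s⁻¹) = s⁻¹ * (Mᵀ * (η * M)) * s⁻¹ := by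
        simp only [Matrix.mul_assoc]
      rw [h2, ← hkey]
      rw [show s⁻¹ * (s * (η * s)) * s⁻¹ = s⁻¹ * s * η * (s * s⁻¹) by
        simp only [Matrix.mul_assoc]]
      rw [Matrix.nonsing_inv_mul _ hsdet, Matrix.mul_nonsing_inv _ hsdet,
        Matrix.one_mul, Matrix.mul_one]
    · rw [Matrix.mul_assoc, Matrix.nonsing_inv_mul _ hsdet, Matrix.mul_one]
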